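/- With A_0 = 0, B_0 = 1, A_1 = s², B_1 = 6t, and A_n = 2t(2n+1)A_{n−1} + s²A_{n−2}, B_n = 2t(2n+1)B_{n−1} + s²B_{n−2} for n ≥ 2, the quotients A_n/B_n converge and lim_{n→∞} A_n/B_n = 2s/(e^{s/t} − 1) + s − 2t; equivalently, e^{s/t} = 1 + 2s/(2t − s + lim_{n→∞} A_n/B_n). -/

import Mathlib

open Filter

/-- Numerators of the convergents of `K_{n=1}^∞ (s² / (2t(2n+1)))`. -/
def Aseq (s t : ℤ) : ℕ → ℤ
  | 0 => 0
  | 1 => s ^ 2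
  | n + 2 => 2 * t * (2 * (n + 2) + 1) * Aseq s t (n + 1) + s ^ 2 * Aseq s t n

/-- Denominators of the convergents of `K_{n=1}^∞ (s² / (2t(2n+1)))`. -/
def Bseq (s t : ℤ) : ℕ → ℤ
  | 0 => 1
  | 1 => 6 * t
  | n + 2 => 2 * t * (2 * (n + 2) + 1) * Bseq s t (n + 1) + s ^ 2 * Bseq s t n

open intervalIntegral


noncomputable def Ifun (x : ℝ) (k : ℕ) : ℝ := ∫ τ in (0:ℝ)..1, (τ*(1-τ))^k * Real.exp (x*τ)

lemma Ifun_cont (x : ℝ) (k : ℕ) : Continuous (fun τ : ℝ => (τ*(1-τ))^k * Real.exp (x*τ)) := by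
  fun_prop

lemma Ifun_pos (x : ℝ) (k : ℕ) : 0 < Ifun x k := by
  apply intervalIntegral.intervalIntegral_pos_of_pos_on
    ((Ifun_cont x k).intervalIntegrable 0 1)
  · intro τ hτ
    have h1 : 0 < τ := hτ.1
    have h2 : 0 < 1 - τ := by linarith [hτ.2]
    positivity
  · norm_num

lemma Ifun_le (x : ℝ) (k : ℕ) : |Ifun x k| ≤ Real.exp |x| := by
  have := intervalIntegral.norm_integral_le_of_norm_le_const
    (C := Real.exp |x|) (a := (0:ℝ)) (b := 1)
    (f := fun τ : ℝ => (τ*(1-τ))^k * Real.exp (x*τ)) ?_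
  · simpa [Ifun] using this
  · intro τ hτ
    rw [Set.uIoc_of_le (by norm_num : (0:ℝ) ≤ 1)] at hτ
    have h1 : 0 < τ := hτ.1
    have h2 : τ ≤ 1 := hτ.2
    have hp : 0 ≤ τ * (1 - τ) := by nlinarith
    have hp1 : τ * (1 - τ) ≤ 1 := by nlinarith
    have he : Real.exp (x*τ) ≤ Real.exp |x| := by
      apply Real.exp_le_exp.2
      calc x * τ ≤ |x * τ| := le_abs_self _
        _ = |x| * |τ| := abs_mul x τ
        _ ≤ |x| * 1 := by
            apply mul_le_mul_of_nonneg_left _ (abs_nonneg x)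
            rw [abs_of_pos h1]; exact h2
        _ = |x| := mul_one _
    have hnn : (0:ℝ) ≤ (τ*(1-τ))^k * Real.exp (x*τ) := by positivity
    rw [Real.norm_eq_abs, abs_of_nonneg hnn]
    calc (τ*(1-τ))^k * Real.exp (x*τ) ≤ 1 * Real.exp (x*τ) := by
          apply mul_le_mul_of_nonneg_right _ (Real.exp_pos _).le
          exact pow_le_one₀ hp hp1
      _ = Real.exp (x*τ) := one_mul _
      _ ≤ Real.exp |x| := he

lemma Ifun_intble (x : ℝ) (k : ℕ) :
    IntervalIntegrable (fun τ : ℝ => (τ*(1-τ))^k * Real.exp (x*τ)) MeasureTheory.volume 0 1 :=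
  (Ifun_cont x k).intervalIntegrable 0 1


lemma keyDeriv (k : ℕ) (x τ : ℝ) :
    HasDerivAt (fun τ : ℝ =>
      (((k:ℝ)+2) * (τ*(1-τ))^(k+1) * (1-2*τ) - x * (τ*(1-τ))^(k+2)) * Real.exp (x*τ))
      ((((k:ℝ)+1)*((k:ℝ)+2)) * ((τ*(1-τ))^k * Real.exp (x*τ))
        - (2*((k:ℝ)+2)*(2*(k:ℝ)+3)) * ((τ*(1-τ))^(k+1) * Real.exp (x*τ))
        - x^2 * ((τ*(1-τ))^(k+2) * Real.exp (x*τ))) τ := by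
  have hp : HasDerivAt (fun τ : ℝ => τ*(1-τ)) (1-2*τ) τ := by
    have := (hasDerivAt_id τ).mul ((hasDerivAt_const τ (1:ℝ)).sub (hasDerivAt_id τ))
    refine this.congr_deriv (Eq.symm ?_); simp [id]; ring
  have hp1 : HasDerivAt (fun τ : ℝ => (τ*(1-τ))^(k+1))
      (((k:ℝ)+1) * (τ*(1-τ))^k * (1-2*τ)) τ := by
    have := hp.pow (k+1)
    refine this.congr_deriv (Eq.symm ?_); push_cast; ring_nf
  have hp2 : HasDerivAt (fun τ : ℝ => (τ*(1-τ))^(k+2))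
      (((k:ℝ)+2) * (τ*(1-τ))^(k+1) * (1-2*τ)) τ := by
    have := hp.pow (k+2)
    refine this.congr_deriv (Eq.symm ?_); push_cast; ring_nf
  have hq : HasDerivAt (fun τ : ℝ => 1-2*τ) (-2) τ := by
    have := (hasDerivAt_const τ (1:ℝ)).sub ((hasDerivAt_id τ).const_mul 2)
    refine this.congr_deriv (Eq.symm ?_); simp [id]
  have he : HasDerivAt (fun τ : ℝ => Real.exp (x*τ)) (x * Real.exp (x*τ)) τ := by
    have := ((hasDerivAt_id τ).const_mul x).exp
    refine this.congr_deriv (Eq.symm ?_); simp [id]; ring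
  have hmain := (((hp1.const_mul ((k:ℝ)+2)).mul hq).sub (hp2.const_mul x)).mul he
  refine hmain.congr_deriv (Eq.symm ?_)
  simp only [Pi.mul_apply, Pi.sub_apply]
  have hsq : (τ*(1-τ))^(k+1) = (τ*(1-τ))^k * (τ*(1-τ)) := pow_succ _ _
  have hsq2 : (τ*(1-τ))^(k+2) = (τ*(1-τ))^k * (τ*(1-τ)) * (τ*(1-τ)) := by
    rw [pow_succ, pow_succ]
  rw [hsq, hsq2]
  ring

lemma keyIdentity (x : ℝ) (k : ℕ) :
    (((k:ℝ)+1)*((k:ℝ)+2)) * Ifun x k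
      = (2*((k:ℝ)+2)*(2*(k:ℝ)+3)) * Ifun x (k+1) + x^2 * Ifun x (k+2) := by
  have hint : IntervalIntegrable (fun τ : ℝ =>
      ((((k:ℝ)+1)*((k:ℝ)+2)) * ((τ*(1-τ))^k * Real.exp (x*τ))
        - (2*((k:ℝ)+2)*(2*(k:ℝ)+3)) * ((τ*(1-τ))^(k+1) * Real.exp (x*τ))
        - x^2 * ((τ*(1-τ))^(k+2) * Real.exp (x*τ)))) MeasureTheory.volume 0 1 :=
    (((Ifun_intble x k).const_mul _).sub ((Ifun_intble x (k+1)).const_mul _)).sub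
      ((Ifun_intble x (k+2)).const_mul _)
  have h0 : (∫ τ in (0:ℝ)..1,
      ((((k:ℝ)+1)*((k:ℝ)+2)) * ((τ*(1-τ))^k * Real.exp (x*τ))
        - (2*((k:ℝ)+2)*(2*(k:ℝ)+3)) * ((τ*(1-τ))^(k+1) * Real.exp (x*τ))
        - x^2 * ((τ*(1-τ))^(k+2) * Real.exp (x*τ)))) = 0 := by
    rw [intervalIntegral.integral_eq_sub_of_hasDerivAt (fun τ _ => keyDeriv k x τ) hint]
    norm_num
  have h1 : (∫ τ in (0:ℝ)..1,
      ((((k:ℝ)+1)*((k:ℝ)+2)) * ((τ*(1-τ))^k * Real.exp (x*τ))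
        - (2*((k:ℝ)+2)*(2*(k:ℝ)+3)) * ((τ*(1-τ))^(k+1) * Real.exp (x*τ))
        - x^2 * ((τ*(1-τ))^(k+2) * Real.exp (x*τ))))
      = (((k:ℝ)+1)*((k:ℝ)+2)) * Ifun x k
        - (2*((k:ℝ)+2)*(2*(k:ℝ)+3)) * Ifun x (k+1) - x^2 * Ifun x (k+2) := by
    rw [intervalIntegral.integral_sub (((Ifun_intble x k).const_mul _).sub
          ((Ifun_intble x (k+1)).const_mul _)) ((Ifun_intble x (k+2)).const_mul _),
      intervalIntegral.integral_sub ((Ifun_intble x k).const_mul _)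
        ((Ifun_intble x (k+1)).const_mul _),
      intervalIntegral.integral_const_mul, intervalIntegral.integral_const_mul,
      intervalIntegral.integral_const_mul]
    rfl
  rw [h1] at h0
  linarith

lemma Ifun_one (x : ℝ) (hx : x ≠ 0) :
    Ifun x 1 = ((x-2)*Real.exp x + x + 2)/x^3 := by
  have hd : ∀ τ : ℝ, HasDerivAt
      (fun τ : ℝ => Real.exp (x*τ) * (-(τ^2)/x + (x+2)*τ/x^2 - (x+2)/x^3))
      ((τ*(1-τ))^1 * Real.exp (x*τ)) τ := by
    intro τ
    have he : HasDerivAt (fun τ : ℝ => Real.exp (x*τ)) (x * Real.exp (x*τ)) τ := by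
      have := ((hasDerivAt_id τ).const_mul x).exp
      refine this.congr_deriv (Eq.symm ?_); simp [id]; ring
    have hpoly : HasDerivAt (fun τ : ℝ => -(τ^2)/x + (x+2)*τ/x^2 - (x+2)/x^3)
        (-(2*τ)/x + (x+2)/x^2) τ := by
      have h1 : HasDerivAt (fun τ : ℝ => -(τ^2)/x) (-(2*τ)/x) τ := by
        have := (hasDerivAt_pow 2 τ).const_mul (-1/x)
        convert this using 1; rfl; rfl
        · funext u; ring
        · ring
      have h2 : HasDerivAt (fun τ : ℝ => (x+2)*τ/x^2) ((x+2)/x^2) τ := by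
        have := (hasDerivAt_id τ).const_mul ((x+2)/x^2)
        convert this using 1; rfl; rfl
        · funext u; simp [id]; ring
        · ring
      have := (h1.add h2).sub (hasDerivAt_const τ ((x+2)/x^3))
      refine this.congr_deriv (Eq.symm ?_); ring
    have := he.mul hpoly
    refine this.congr_deriv (Eq.symm ?_)
    field_simp
    ring
  have := intervalIntegral.integral_eq_sub_of_hasDerivAt (fun τ _ => hd τ) (Ifun_intble x 1)
  rw [Ifun, this]
  rw [mul_one, mul_zero, Real.exp_zero]
  field_simp
  ring

lemma Ifun_two (x : ℝ) (hx : x ≠ 0) :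
    Ifun x 2 = ((2*x^2-12*x+24)*Real.exp x - 2*(x^2+6*x+12))/x^5 := by
  have hd : ∀ τ : ℝ, HasDerivAt
      (fun τ : ℝ => Real.exp (x*τ) *
        (τ^4/x - (2*x+4)*τ^3/x^2 + (x^2+6*x+12)*τ^2/x^3
          - 2*(x^2+6*x+12)*τ/x^4 + 2*(x^2+6*x+12)/x^5))
      ((τ*(1-τ))^2 * Real.exp (x*τ)) τ := by
    intro τ
    have he : HasDerivAt (fun τ : ℝ => Real.exp (x*τ)) (x * Real.exp (x*τ)) τ := by
      have := ((hasDerivAt_id τ).const_mul x).exp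
      refine this.congr_deriv (Eq.symm ?_); simp [id]; ring
    have hpoly : HasDerivAt (fun τ : ℝ =>
        τ^4/x - (2*x+4)*τ^3/x^2 + (x^2+6*x+12)*τ^2/x^3
          - 2*(x^2+6*x+12)*τ/x^4 + 2*(x^2+6*x+12)/x^5)
        (4*τ^3/x - 3*(2*x+4)*τ^2/x^2 + 2*(x^2+6*x+12)*τ/x^3 - 2*(x^2+6*x+12)/x^4) τ := by
      have h1 : HasDerivAt (fun τ : ℝ => τ^4/x) (4*τ^3/x) τ := by
        have := (hasDerivAt_pow 4 τ).const_mul (1/x)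
        convert this using 1; rfl; rfl
        · funext u; ring
        · push_cast; ring
      have h2 : HasDerivAt (fun τ : ℝ => (2*x+4)*τ^3/x^2) (3*(2*x+4)*τ^2/x^2) τ := by
        have := (hasDerivAt_pow 3 τ).const_mul ((2*x+4)/x^2)
        convert this using 1; rfl; rfl
        · funext u; ring
        · push_cast; ring
      have h3 : HasDerivAt (fun τ : ℝ => (x^2+6*x+12)*τ^2/x^3) (2*(x^2+6*x+12)*τ/x^3) τ := by
        have := (hasDerivAt_pow 2 τ).const_mul ((x^2+6*x+12)/x^3)
        convert this using 1; rfl; rfl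
        · funext u; ring
        · push_cast; ring
      have h4 : HasDerivAt (fun τ : ℝ => 2*(x^2+6*x+12)*τ/x^4) (2*(x^2+6*x+12)/x^4) τ := by
        have := (hasDerivAt_id τ).const_mul (2*(x^2+6*x+12)/x^4)
        convert this using 1; rfl; rfl
        · funext u; simp [id]; ring
        · ring
      have := (((h1.sub h2).add h3).sub h4).add (hasDerivAt_const τ (2*(x^2+6*x+12)/x^5))
      refine this.congr_deriv (Eq.symm ?_); ring
    have := he.mul hpoly
    refine this.congr_deriv (Eq.symm ?_)
    field_simp
    ring
  have := intervalIntegral.integral_eq_sub_of_hasDerivAt (fun τ _ => hd τ) (Ifun_intble x 2)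
  rw [Ifun, this]
  rw [mul_one, mul_zero, Real.exp_zero]
  field_simp
  ring

noncomputable def rho (s t : ℝ) (m : ℕ) : ℝ :=
  (-1)^m * (s^2/t)^(m+1) / (Nat.factorial (m+1)) * Ifun (s/t) (m+1)

lemma rho_rec (s t : ℝ) (hs : s ≠ 0) (ht : t ≠ 0) (m : ℕ) :
    rho s t (m+2) = 2*t*(2*((m:ℝ)+2)+1) * rho s t (m+1) + s^2 * rho s t m := by
  have hk := keyIdentity (s/t) (m+1)
  push_cast at hk
  have hx : (s/t) ≠ 0 := div_ne_zero hs ht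
  have hI3 : Ifun (s/t) (m+3)
      = ((((m:ℝ)+2)*((m:ℝ)+3)) * Ifun (s/t) (m+1)
          - 2*((m:ℝ)+3)*(2*(m:ℝ)+5) * Ifun (s/t) (m+2)) / (s/t)^2 := by
    rw [eq_div_iff (pow_ne_zero 2 hx)]
    rw [show m+3 = m+1+2 from rfl, show m+2 = m+1+1 from rfl]
    linarith [hk]
  simp only [rho]
  have hf2 : ((Nat.factorial (m+2) : ℝ)) = ((m:ℝ)+2) * (Nat.factorial (m+1)) := by
    rw [show m+2 = (m+1)+1 from rfl, Nat.factorial_succ, Nat.cast_mul]; push_cast; ring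
  have hf3 : ((Nat.factorial (m+3) : ℝ)) = ((m:ℝ)+3) * (((m:ℝ)+2) * (Nat.factorial (m+1))) := by
    rw [show m+3 = (m+2)+1 from rfl, Nat.factorial_succ, Nat.cast_mul, hf2]; push_cast; ring
  have hC2 : (s^2/t)^(m+1+1) = (s^2/t)^(m+1) * (s^2/t) := pow_succ _ _
  have hC3 : (s^2/t)^(m+2+1) = (s^2/t)^(m+1) * (s^2/t) * (s^2/t) := by
    rw [pow_succ, hC2]
  have hs1 : ((-1:ℝ))^(m+1) = -((-1:ℝ))^m := by rw [pow_succ]; ring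
  have hs2 : ((-1:ℝ))^(m+2) = ((-1:ℝ))^m := by rw [pow_succ, pow_succ]; ring
  have hF : ((Nat.factorial (m+1) : ℝ)) ≠ 0 := by
    exact_mod_cast Nat.factorial_ne_zero (m+1)
  have hm2 : ((m:ℝ)+2) ≠ 0 := by positivity
  have hm3 : ((m:ℝ)+3) ≠ 0 := by positivity
  rw [show m+2+1 = m+3 from rfl] at hC3 ⊢
  rw [hC2, hC3, hs1, hs2, hf2, hf3, hI3]
  field_simp
  ring

theorem convergents_tendsto_exp (s t : ℤ) (hs : s ≠ 0) (ht : 0 < t)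
    (hst : Int.gcd s t = 1) :
    Tendsto (fun n => (Aseq s t n : ℝ) / (Bseq s t n : ℝ)) atTop
      (nhds (2 * (s : ℝ) / (Real.exp ((s : ℝ) / (t : ℝ)) - 1) + (s : ℝ) - 2 * (t : ℝ))) ∧
    Real.exp ((s : ℝ) / (t : ℝ)) = 1 + 2 * (s : ℝ) / (2 * (t : ℝ) - (s : ℝ) +
      (2 * (s : ℝ) / (Real.exp ((s : ℝ) / (t : ℝ)) - 1) + (s : ℝ) - 2 * (t : ℝ))) := by
  have htR : (0:ℝ) < (t:ℝ) := by exact_mod_cast ht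
  have htne : (t:ℝ) ≠ 0 := ne_of_gt htR
  have hsR : (s:ℝ) ≠ 0 := Int.cast_ne_zero.2 hs
  set x : ℝ := (s:ℝ)/(t:ℝ) with hxdef
  have hx : x ≠ 0 := div_ne_zero hsR htne
  set E : ℝ := Real.exp x with hEdef
  have hE1 : E - 1 ≠ 0 := by
    rw [sub_ne_zero, hEdef]
    intro h
    exact hx ((Real.exp_eq_one_iff x).1 h)
  -- explicit values of rho 0 and rho 1
  have hrho0I : rho (s:ℝ) (t:ℝ) 0 = ((s:ℝ)^2/(t:ℝ)) * Ifun x 1 := by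
    simp only [rho, pow_zero, pow_one, one_mul, Nat.factorial_one, Nat.cast_one, div_one,
      ← hxdef]
    norm_num
  have hrho1I : rho (s:ℝ) (t:ℝ) 1 = -(((s:ℝ)^2/(t:ℝ))^2/2) * Ifun x 2 := by
    simp only [rho, pow_one, ← hxdef]
    norm_num [Nat.factorial]
    ring
  have hrho0v : rho (s:ℝ) (t:ℝ) 0 = ((s:ℝ)^2/(t:ℝ)) * (((x-2)*E + x + 2)/x^3) := by
    rw [hrho0I, Ifun_one x hx, ← hEdef]
  have hrho1v : rho (s:ℝ) (t:ℝ) 1 =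
      -(((s:ℝ)^2/(t:ℝ))^2/2) * (((2*x^2-12*x+24)*E - 2*(x^2+6*x+12))/x^5) := by
    rw [hrho1I, Ifun_two x hx, ← hEdef]
  -- positivity facts
  have hI1pos : 0 < Ifun x 1 := Ifun_pos x 1
  have hI2pos : 0 < Ifun x 2 := Ifun_pos x 2
  have hrho0pos : 0 < rho (s:ℝ) (t:ℝ) 0 := by
    rw [hrho0I]
    have h9 : 0 < (s:ℝ)^2/(t:ℝ) := by positivity
    positivity
  have hrho1neg : rho (s:ℝ) (t:ℝ) 1 < 0 := by
    rw [hrho1I]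
    have hc : 0 < ((s:ℝ)^2/(t:ℝ))^2/2 := by positivity
    nlinarith
  -- the constants in the linear combination
  obtain ⟨cB, hcB⟩ : ∃ c : ℝ, c = rho (s:ℝ) (t:ℝ) 0 := ⟨_, rfl⟩
  obtain ⟨cA, hcA⟩ : ∃ c : ℝ, c = (rho (s:ℝ) (t:ℝ) 1 - 6*(t:ℝ)*rho (s:ℝ) (t:ℝ) 0)/(s:ℝ)^2 :=
    ⟨_, rfl⟩
  have hcAneg : cA < 0 := by
    rw [hcA]
    apply div_neg_of_neg_of_pos
    · nlinarith
    · positivity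
  have hcAne : cA ≠ 0 := ne_of_lt hcAneg
  -- the linear combination
  have comb : ∀ m, rho (s:ℝ) (t:ℝ) m
      = cA * (Aseq s t m : ℝ) + cB * (Bseq s t m : ℝ) := by
    intro m
    induction m using Nat.twoStepInduction with
    | zero => simp [Aseq, Bseq, hcB]
    | one =>
        show rho (s:ℝ) (t:ℝ) 1 = cA * ((s^2 : ℤ) : ℝ) + cB * ((6*t : ℤ) : ℝ)
        rw [hcA, hcB]
        push_cast
        field_simp
        ring
    | more n ih1 ih2 =>
        have hrec := rho_rec (s:ℝ) (t:ℝ) hsR htne n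
        rw [hrec, ih1, ih2]
        show _ = cA * ((2*t*(2*((n:ℤ)+2)+1) * Aseq s t (n+1) + s^2 * Aseq s t n : ℤ) : ℝ)
          + cB * ((2*t*(2*((n:ℤ)+2)+1) * Bseq s t (n+1) + s^2 * Bseq s t n : ℤ) : ℝ)
        push_cast
        ring
  -- B is at least 1
  have hB1 : ∀ n, 1 ≤ Bseq s t n := by
    intro n
    induction n using Nat.twoStepInduction with
    | zero => simp [Bseq]
    | one => show (1:ℤ) ≤ 6*t; omega
    | more n ih1 ih2 =>
        show (1:ℤ) ≤ 2*t*(2*((n:ℤ)+2)+1) * Bseq s t (n+1) + s^2 * Bseq s t n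
        have hn : (0:ℤ) ≤ (n:ℤ) := Int.natCast_nonneg n
        have hs2 : (0:ℤ) ≤ s^2 := sq_nonneg s
        nlinarith [mul_nonneg hs2 (by linarith : (0:ℤ) ≤ Bseq s t n),
          mul_le_mul_of_nonneg_right
            (by nlinarith : (10:ℤ) ≤ 2*t*(2*((n:ℤ)+2)+1))
            (by linarith : (0:ℤ) ≤ Bseq s t (n+1))]
  have hBR : ∀ n, (1:ℝ) ≤ (Bseq s t n : ℝ) := by
    intro n; exact_mod_cast hB1 n
  have hBne : ∀ n, ((Bseq s t n : ℝ)) ≠ 0 := fun n => by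
    have := hBR n; linarith
  -- rho tends to 0
  have hrho_tendsto : Tendsto (fun m => rho (s:ℝ) (t:ℝ) m) atTop (nhds 0) := by
    have hbound : ∀ m, ‖rho (s:ℝ) (t:ℝ) m‖
        ≤ |(s:ℝ)^2/(t:ℝ)|^(m+1)/((Nat.factorial (m+1) : ℝ)) * Real.exp |x| := by
      intro m
      have hF : (0:ℝ) < ((Nat.factorial (m+1) : ℝ)) := by
        exact_mod_cast Nat.factorial_pos (m+1)
      rw [Real.norm_eq_abs, rho, ← hxdef]
      rw [abs_mul, abs_div, abs_mul, abs_pow, abs_pow, abs_neg, abs_one, one_pow, one_mul,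
        abs_of_pos hF]
      apply mul_le_mul_of_nonneg_left (Ifun_le x (m+1))
      positivity
    have hg : Tendsto
        (fun m => |(s:ℝ)^2/(t:ℝ)|^(m+1)/((Nat.factorial (m+1) : ℝ)) * Real.exp |x|)
        atTop (nhds 0) := by
      have h1 := FloorSemiring.tendsto_pow_div_factorial_atTop (K := ℝ) (|(s:ℝ)^2/(t:ℝ)|)
      have h2 := (h1.comp (tendsto_add_atTop_nat 1)).mul_const (Real.exp |x|)
      simpa using h2
    exact squeeze_zero_norm hbound hg
  have hrhoB : Tendsto (fun m => rho (s:ℝ) (t:ℝ) m / (Bseq s t m : ℝ)) atTop (nhds 0) := by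
    have hbound : ∀ m, ‖rho (s:ℝ) (t:ℝ) m / (Bseq s t m : ℝ)‖ ≤ ‖rho (s:ℝ) (t:ℝ) m‖ := by
      intro m
      rw [norm_div]
      apply div_le_self (norm_nonneg _)
      rw [Real.norm_eq_abs, abs_of_pos (by linarith [hBR m])]
      exact hBR m
    exact squeeze_zero_norm hbound (by simpa using hrho_tendsto.norm)
  -- key algebraic identity : L * cA = - cB
  have hkey : (2 * (s:ℝ) / (E - 1) + (s:ℝ) - 2 * (t:ℝ)) * cA = - cB := by
    rw [hcA, hcB, hrho0v, hrho1v, hxdef]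
    field_simp
    ring
  have hmain : Tendsto (fun n => (Aseq s t n : ℝ) / (Bseq s t n : ℝ)) atTop
      (nhds (2 * (s:ℝ) / (E - 1) + (s:ℝ) - 2 * (t:ℝ))) := by
    have heq : ∀ m, (Aseq s t m : ℝ) / (Bseq s t m : ℝ)
        = (rho (s:ℝ) (t:ℝ) m / (Bseq s t m : ℝ) - cB)/cA := by
      intro m
      rw [comb m]
      rw [eq_div_iff hcAne]
      field_simp [hBne m]
      ring
    have h2 : Tendsto (fun m => (rho (s:ℝ) (t:ℝ) m / (Bseq s t m : ℝ) - cB)/cA) atTop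
        (nhds ((0 - cB)/cA)) := (hrhoB.sub_const cB).div_const cA
    have hval : (0 - cB)/cA = 2 * (s:ℝ) / (E - 1) + (s:ℝ) - 2 * (t:ℝ) := by
      rw [zero_sub, ← hkey]
      field_simp
    rw [← hval]
    simpa only [heq] using h2
  refine ⟨hmain, ?_⟩
  have h3 : 2 * (t:ℝ) - (s:ℝ) + (2 * (s:ℝ) / (E - 1) + (s:ℝ) - 2 * (t:ℝ))
      = 2 * (s:ℝ) / (E - 1) := by ring
  rw [h3]
  field_simp
  ring
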